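/- Let n ≥ 1, k ≥ 1, and let π be any probability distribution on the set of all rankings (permutations) of n alternatives. If 2k-1 voters independently sample rankings σ_1,…,σ_{2k-1} from π, then the probability that a Condorcet winner exists is at least n^{-(2k-2)} · ∑_{ℓ=0}^{k-1} C(2k-1, ℓ) (n-1)^ℓ. -/

import Mathlib

open Finset

/-- `A` is a Condorcet winner for the profile `prof` of `2k-1` rankings (a ranking is a
permutation of `Fin n`; voter `i` prefers `a` over `b` iff `prof i a < prof i b`):
for every other alternative `b`, at least `k` of the voters rank `a` above `b`. -/
def CondorcetWinner {n : ℕ} (k : ℕ) (prof : Fin (2*k-1) → Equiv.Perm (Fin n))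
    (a : Fin n) : Prop :=
  ∀ b : Fin n, b ≠ a → k ≤ (univ.filter (fun i => prof i a < prof i b)).card


noncomputable def Hf (k : ℕ) (x : ℝ) : ℝ :=
  ∑ ℓ ∈ range k, (Nat.choose (2*k-1) ℓ : ℝ) * (x ^ (2*k-1-ℓ) * (1-x) ^ ℓ)

noncomputable def ck (k : ℕ) : ℝ := (k * Nat.choose (2*k-1) k : ℕ)

noncomputable def phi (k : ℕ) (x : ℝ) : ℝ := (x*(1-x))^(k-1)

lemma Hf_hasDerivAt (k : ℕ) (hk : 1 ≤ k) (x : ℝ) :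
    HasDerivAt (Hf k) (ck k * phi k x) x := by
  set m := 2*k-1 with hm
  set f : ℕ → ℝ := fun ℓ => ((Nat.choose m ℓ * ℓ : ℕ) : ℝ) * (x ^ (m-ℓ) * (1-x) ^ (ℓ-1)) with hf
  have key : ∀ ℓ ∈ range k, HasDerivAt (fun y => (Nat.choose m ℓ : ℝ) * (y ^ (m-ℓ) * (1-y) ^ ℓ))
      (f (ℓ+1) - f ℓ) x := by
    intro ℓ hℓ
    have hℓk : ℓ < k := mem_range.mp hℓ
    have hℓm : ℓ + 1 ≤ m := by omega
    have h1 : HasDerivAt (fun y : ℝ => y ^ (m-ℓ)) ((m-ℓ : ℕ) * x ^ (m-ℓ-1)) x := hasDerivAt_pow _ _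
    have h2 : HasDerivAt (fun y : ℝ => (1-y) ^ ℓ) ((ℓ:ℝ) * (1-x) ^ (ℓ-1) * (-1)) x := by
      have hg : HasDerivAt (fun y : ℝ => 1 - y) (-1) x := by
        simpa using (hasDerivAt_const x (1:ℝ)).fun_sub (hasDerivAt_id x)
      exact (hasDerivAt_pow ℓ (1-x)).comp x hg
    have h3 := (h1.fun_mul h2).const_mul ((Nat.choose m ℓ : ℝ))
    refine h3.congr_deriv ?_
    have hcast : ((Nat.choose m (ℓ+1) * (ℓ+1) : ℕ) : ℝ) = (Nat.choose m ℓ : ℝ) * ((m : ℝ) - ℓ) := by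
      have := Nat.choose_succ_right_eq m ℓ
      have h4 : ((Nat.choose m ℓ * (m - ℓ) : ℕ) : ℝ) = (Nat.choose m ℓ : ℝ) * ((m:ℝ) - ℓ) := by
        push_cast [Nat.cast_sub (by omega : ℓ ≤ m)]; ring
      rw [this, h4]
    have hsub1 : m - (ℓ+1) = m - ℓ - 1 := by omega
    have hsub2 : (ℓ+1) - 1 = ℓ := by omega
    have hmc : ((m - ℓ : ℕ) : ℝ) = (m:ℝ) - ℓ := Nat.cast_sub (by omega)
    simp only [hf, hsub1, hsub2, hcast, hmc]
    push_cast
    ring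
  have hsum := HasDerivAt.fun_sum key
  have htel : ∑ ℓ ∈ range k, (f (ℓ+1) - f ℓ) = f k - f 0 := Finset.sum_range_sub f k
  have hf0 : f 0 = 0 := by simp [hf]
  have hfk : f k = ck k * phi k x := by
    rw [hf, ck, phi]
    have h5 : m - k = k - 1 := by omega
    push_cast
    rw [h5, mul_pow]
    ring
  have heq : ∑ ℓ ∈ range k, (f (ℓ+1) - f ℓ) = ck k * phi k x := by
    rw [htel, hf0, hfk]; ring
  exact heq ▸ hsum

lemma ck_nonneg (k : ℕ) : 0 ≤ ck k := Nat.cast_nonneg _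

lemma phi_mono (k : ℕ) {v y : ℝ} (hv0 : 0 ≤ v) (h1 : v ≤ y) (h2 : y ≤ 1 - v) :
    phi k v ≤ phi k y := by
  apply pow_le_pow_left₀ (by nlinarith) (by nlinarith)

lemma mono_of_hasDeriv {f f' : ℝ → ℝ} {a b : ℝ}
    (hd : ∀ x, HasDerivAt f (f' x) x) (h0 : ∀ x ∈ Set.Icc a b, 0 ≤ f' x) :
    MonotoneOn f (Set.Icc a b) := by
  apply monotoneOn_of_deriv_nonneg (convex_Icc a b)
    (fun x _ => (hd x).continuousAt.continuousWithinAt)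
    (fun x _ => (hd x).differentiableAt.differentiableWithinAt)
  intro x hx
  rw [(hd x).deriv]
  exact h0 x (interior_subset hx)

lemma anti_of_hasDeriv {f f' : ℝ → ℝ} {a b : ℝ}
    (hd : ∀ x, HasDerivAt f (f' x) x) (h0 : ∀ x ∈ Set.Icc a b, f' x ≤ 0) :
    AntitoneOn f (Set.Icc a b) := by
  apply antitoneOn_of_deriv_nonpos (convex_Icc a b)
    (fun x _ => (hd x).continuousAt.continuousWithinAt)
    (fun x _ => (hd x).differentiableAt.differentiableWithinAt)
  intro x hx
  rw [(hd x).deriv]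
  exact h0 x (interior_subset hx)

/-- tangent line lemma: for `t ∈ [0,1/2]` and `x ∈ [0,1-t]`,
  `Hf k x ≥ Hf k t + ck k * phi k t * (x - t)`. -/
lemma tangent (k : ℕ) (hk : 1 ≤ k) {t x : ℝ} (ht0 : 0 ≤ t) (ht : t ≤ 1/2)
    (hx0 : 0 ≤ x) (hx : x ≤ 1 - t) :
    Hf k t + ck k * phi k t * (x - t) ≤ Hf k x := by
  set g : ℝ → ℝ := fun y => Hf k y - ck k * phi k t * y with hg
  have hd : ∀ y, HasDerivAt g (ck k * phi k y - ck k * phi k t) y := by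
    intro y
    simpa using (Hf_hasDerivAt k hk y).fun_sub ((hasDerivAt_id y).const_mul (ck k * phi k t))
  have key : g t ≤ g x := by
    rcases le_total x t with hxt | htx
    · have := anti_of_hasDeriv (f := g) (a := 0) (b := t) hd ?_ ⟨hx0, hxt⟩ ⟨ht0, le_refl t⟩ hxt
      · exact this
      · intro y hy
        have : phi k y ≤ phi k t := phi_mono k hy.1 hy.2 (by linarith [hy.2])
        nlinarith [ck_nonneg k]
    · have := mono_of_hasDeriv (f := g) (a := t) (b := 1-t) hd ?_ ⟨le_refl t, by linarith⟩ ⟨htx, hx⟩ htx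
      · exact this
      · intro y hy
        have : phi k t ≤ phi k y := phi_mono k ht0 hy.1 hy.2
        nlinarith [ck_nonneg k]
  simp only [hg] at key
  linarith

lemma Hf_symm (k : ℕ) (hk : 1 ≤ k) (x : ℝ) : Hf k x + Hf k (1-x) = 1 := by
  set m := 2*k-1 with hm
  set f : ℕ → ℝ := fun j => x ^ j * (1-x) ^ (m-j) * (Nat.choose m j : ℝ) with hf
  have htot : ∑ j ∈ range (m+1), f j = 1 := by
    have h := add_pow x (1-x) m
    have h1 : x + (1-x) = (1:ℝ) := by ring
    rw [h1, one_pow] at h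
    exact h.symm
  have h2 : Hf k (1-x) = ∑ ℓ ∈ range k, f ℓ := by
    unfold Hf
    apply Finset.sum_congr rfl
    intro ℓ hℓ
    rw [hf]
    simp only [sub_sub_cancel]
    ring
  have h3 : Hf k x = ∑ j ∈ Ico k (m+1), f j := by
    unfold Hf
    apply Finset.sum_nbij' (i := fun ℓ => m - ℓ) (j := fun j => m - j)
    · intro ℓ hℓ; simp only [mem_range] at hℓ; simp only [mem_Ico]; omega
    · intro j hj; simp only [mem_Ico] at hj; simp only [mem_range]; omega
    · intro ℓ hℓ; simp only [mem_range] at hℓ; omega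
    · intro j hj; simp only [mem_Ico] at hj; omega
    · intro ℓ hℓ
      simp only [mem_range] at hℓ
      have e1 : m - (m - ℓ) = ℓ := by omega
      have e2 : Nat.choose m (m - ℓ) = Nat.choose m ℓ := Nat.choose_symm (by omega)
      simp only [hf]
      rw [e1, e2, ← hm]
      ring
  have hsplit : (∑ j ∈ range k, f j) + ∑ j ∈ Ico k (m+1), f j = ∑ j ∈ range (m+1), f j := by
    rw [range_eq_Ico, range_eq_Ico]
    exact Finset.sum_Ico_consecutive f (Nat.zero_le k) (by omega : k ≤ m+1)
  rw [h2, h3]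
  linarith [htot, hsplit]

lemma L6 (k : ℕ) (hk : 1 ≤ k) {N : ℝ} (hN : 2 ≤ N) :
    N * Hf k (1/N) ≤ Hf k (1 - 1/N) + (N-1) * Hf k ((1/N)/(N-1)) := by
  have hN0 : (0:ℝ) < N := by linarith
  have hN1 : (0:ℝ) < N - 1 := by linarith
  set t : ℝ := 1/N with hts
  set t' : ℝ := t/(N-1) with ht's
  have ht0 : 0 < t := by positivity
  have ht'0 : 0 < t' := by positivity
  have ht't : t' ≤ t := by
    rw [ht's, div_le_iff₀ hN1]; nlinarith
  set F : ℝ → ℝ := fun v => Hf k ((N-1)*v) - (N-1) * Hf k v with hF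
  have hd : ∀ v, HasDerivAt F ((N-1) * (ck k * phi k ((N-1)*v)) - (N-1) * (ck k * phi k v)) v := by
    intro v
    have h1 : HasDerivAt (fun v : ℝ => Hf k ((N-1)*v)) (ck k * phi k ((N-1)*v) * (N-1)) v := by
      exact (Hf_hasDerivAt k hk ((N-1)*v)).comp v (by simpa using (hasDerivAt_id v).const_mul (N-1))
    have h2 := (Hf_hasDerivAt k hk v).const_mul (N-1)
    exact (h1.fun_sub h2).congr_deriv (by ring)
  have hmono := mono_of_hasDeriv (a := t') (b := t) hd ?_
  · have key := hmono ⟨le_refl t', ht't⟩ ⟨ht't, le_refl t⟩ ht't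
    have e1 : (N-1) * t' = t := by rw [ht's]; field_simp
    have e2 : (N-1) * t = 1 - t := by rw [hts]; field_simp
    rw [hF] at key
    simp only [e1, e2] at key
    linarith
  · intro v hv
    have hv0 : 0 ≤ v := le_trans (le_of_lt ht'0) hv.1
    have h5 : phi k v ≤ phi k ((N-1)*v) := by
      apply phi_mono k hv0 (by nlinarith)
      have : N * v ≤ 1 := by
        have := hv.2; rw [hts] at this
        calc N * v ≤ N * (1/N) := by nlinarith
        _ = 1 := by field_simp
      nlinarith
    have := mul_nonneg (le_of_lt hN1) (mul_nonneg (ck_nonneg k) (sub_nonneg.mpr h5))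
    linarith

lemma Dmono (k : ℕ) (hk : 1 ≤ k) {N s t : ℝ} (hN : 2 ≤ N) (hs0 : 0 ≤ s)
    (hst : s ≤ t) (ht : t ≤ 1/2) :
    Hf k s - (N-1) * Hf k (s/(N-1)) ≤ Hf k t - (N-1) * Hf k (t/(N-1)) := by
  have hN1 : (0:ℝ) < N - 1 := by linarith
  set D : ℝ → ℝ := fun v => Hf k v - (N-1) * Hf k (v/(N-1)) with hD
  have hd : ∀ v, HasDerivAt D (ck k * phi k v - ck k * phi k (v/(N-1))) v := by
    intro v
    have h1 : HasDerivAt (fun v : ℝ => Hf k (v/(N-1))) (ck k * phi k (v/(N-1)) * (1/(N-1))) v :=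
      HasDerivAt.comp (h := fun x : ℝ => x/(N-1)) v (Hf_hasDerivAt k hk (v/(N-1))) ((hasDerivAt_id' v).div_const (N-1))
    have h2 := (Hf_hasDerivAt k hk v).fun_sub (h1.const_mul (N-1))
    exact h2.congr_deriv (by field_simp)
  have hmono := mono_of_hasDeriv (a := 0) (b := t) hd ?_
  · exact hmono ⟨hs0, hst⟩ ⟨hs0.trans hst, le_refl t⟩ hst
  · intro v hv
    have hv0 : 0 ≤ v := hv.1
    have hvd : v/(N-1) ≤ v := div_le_self hv0 (by linarith)
    have h5 : phi k (v/(N-1)) ≤ phi k v := by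
      have hd0 : 0 ≤ v/(N-1) := by positivity
      apply phi_mono k hd0 hvd
      have hvh : v ≤ 1/2 := le_trans hv.2 ht
      linarith
    have := mul_nonneg (ck_nonneg k) (sub_nonneg.mpr h5)
    linarith

lemma sum_Hf_ge (k n : ℕ) (hk : 1 ≤ k) (hn : 1 ≤ n) (q : Fin n → ℝ)
    (h0 : ∀ a, 0 ≤ q a) (h1 : ∑ a, q a = 1) :
    (n:ℝ) * Hf k (1/(n:ℝ)) ≤ ∑ a, Hf k (q a) := by
  rcases eq_or_lt_of_le hn with hn1 | hn2
  · -- n = 1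
    subst hn1  -- wrong direction? hn1 : 1 = n
    rw [Fin.sum_univ_one] at h1 ⊢
    rw [h1]
    norm_num
  · -- n ≥ 2
    have hn2' : 2 ≤ n := hn2
    have hN : (2:ℝ) ≤ (n:ℝ) := by exact_mod_cast hn2'
    set N : ℝ := (n:ℝ) with hNs
    have hN0 : (0:ℝ) < N := by linarith
    have hN1 : (0:ℝ) < N - 1 := by linarith
    set t : ℝ := 1/N with hts
    have ht0 : 0 < t := by positivity
    have ht2 : t ≤ 1/2 := by
      rw [hts, div_le_div_iff₀ hN0 (by norm_num)]; linarith
    have hNt : N * t = 1 := by rw [hts]; field_simp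
    by_cases hc : ∀ a, q a ≤ 1 - t
    · -- tangent at t for all coordinates
      have hsum : ∑ a, (Hf k t + ck k * phi k t * (q a - t)) ≤ ∑ a, Hf k (q a) :=
        Finset.sum_le_sum fun a _ => tangent k hk (le_of_lt ht0) ht2 (h0 a) (hc a)
      have hexp : ∑ a, (Hf k t + ck k * phi k t * (q a - t))
          = N * Hf k t + ck k * phi k t * (1 - N * t) := by
        rw [Finset.sum_add_distrib, Finset.sum_const, Finset.card_univ, Fintype.card_fin,
          ← Finset.mul_sum, Finset.sum_sub_distrib, h1, Finset.sum_const, Finset.card_univ,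
          Fintype.card_fin]
        push_cast
        ring
      rw [hexp, hNt] at hsum
      simpa using hsum
    · -- one big coordinate
      push_neg at hc
      obtain ⟨b, hb⟩ := hc
      set s : ℝ := 1 - q b with hss
      have hsq : ∑ a ∈ univ.erase b, q a = s := by
        rw [hss, ← h1]
        rw [← Finset.add_sum_erase _ q (mem_univ b)]
        ring
      have hs0 : 0 ≤ s := by
        rw [← hsq]; exact Finset.sum_nonneg fun a _ => h0 a
      have hst : s < t := by rw [hss]; linarith
      have hqa : ∀ a ∈ univ.erase b, q a ≤ s := by
        intro a ha
        rw [← hsq]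
        exact Finset.single_le_sum (fun c _ => h0 c) ha
      set u : ℝ := s/(N-1) with hus
      have hu0 : 0 ≤ u := by positivity
      have hus' : u ≤ s := div_le_self hs0 (by linarith)
      have hu2 : u ≤ 1/2 := by linarith
      have htang : ∀ a ∈ univ.erase b, Hf k u + ck k * phi k u * (q a - u) ≤ Hf k (q a) := by
        intro a ha
        exact tangent k hk hu0 hu2 (h0 a) (by linarith [hqa a ha])
      have hcard : (univ.erase b).card = n - 1 := by
        rw [Finset.card_erase_of_mem (mem_univ b), Finset.card_univ, Fintype.card_fin]
      have hcardR : ((n - 1 : ℕ) : ℝ) = N - 1 := by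
        rw [Nat.cast_sub hn]; simp [hNs]
      have hsum2 : (N - 1) * Hf k u ≤ ∑ a ∈ univ.erase b, Hf k (q a) := by
        have h6 : ∑ a ∈ univ.erase b, (Hf k u + ck k * phi k u * (q a - u))
            ≤ ∑ a ∈ univ.erase b, Hf k (q a) := Finset.sum_le_sum htang
        have h7 : ∑ a ∈ univ.erase b, (Hf k u + ck k * phi k u * (q a - u))
            = (N-1) * Hf k u + ck k * phi k u * (s - (N-1) * u) := by
          rw [Finset.sum_add_distrib, Finset.sum_const, hcard, ← Finset.mul_sum,
            Finset.sum_sub_distrib, hsq, Finset.sum_const, hcard, nsmul_eq_mul,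
            nsmul_eq_mul, hcardR]
        have h8 : (N-1) * u = s := by rw [hus]; field_simp
        rw [h7, h8] at h6
        simpa using h6
      have hqb : Hf k (q b) = 1 - Hf k s := by
        have := Hf_symm k hk s
        have hqbs : q b = 1 - s := by rw [hss]; ring
        rw [hqbs]; linarith
      have hD := Dmono k hk (N := N) (s := s) (t := t) hN hs0 (le_of_lt hst) ht2
      have hL6 := L6 k hk (N := N) hN
      have hsymt := Hf_symm k hk t
      have hsplit : ∑ a, Hf k (q a) = Hf k (q b) + ∑ a ∈ univ.erase b, Hf k (q a) :=
        (Finset.add_sum_erase _ _ (mem_univ b)).symm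
      rw [hsplit, hqb]
      have e9 : (1:ℝ) - 1/N = 1 - t := by rw [hts]
      rw [e9] at hL6
      have e10 : (1:ℝ)/N = t := rfl
      rw [e10] at hL6
      linarith

noncomputable def qtop (n : ℕ) [NeZero n] (π : Equiv.Perm (Fin n) → ℝ) (a : Fin n) : ℝ :=
  ∑ σ ∈ univ.filter (fun σ : Equiv.Perm (Fin n) => σ a = 0), π σ

lemma qtop_sum {n : ℕ} [NeZero n] (π : Equiv.Perm (Fin n) → ℝ) (hπ1 : ∑ σ, π σ = 1) :
    ∑ a, qtop n π a = 1 := by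
  unfold qtop
  rw [← hπ1]
  calc ∑ a, ∑ σ ∈ univ.filter (fun σ : Equiv.Perm (Fin n) => σ a = 0), π σ
      = ∑ a : Fin n, ∑ σ : Equiv.Perm (Fin n), if σ a = 0 then π σ else 0 := by
        apply Finset.sum_congr rfl; intro a _; rw [Finset.sum_filter]
    _ = ∑ σ : Equiv.Perm (Fin n), ∑ a : Fin n, if σ a = 0 then π σ else 0 := Finset.sum_comm
    _ = ∑ σ : Equiv.Perm (Fin n), π σ := by
        apply Finset.sum_congr rfl; intro σ _
        have : ∀ a : Fin n, (σ a = 0) = (a = σ.symm 0) := by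
          intro a; rw [Equiv.apply_eq_iff_eq_symm_apply]
        simp only [this]
        rw [Finset.sum_ite_eq' univ (σ.symm 0) (fun _ => π σ)]
        simp

lemma qtop_nonneg {n : ℕ} [NeZero n] (π : Equiv.Perm (Fin n) → ℝ) (hπ0 : ∀ σ, 0 ≤ π σ)
    (a : Fin n) : 0 ≤ qtop n π a :=
  Finset.sum_nonneg fun σ _ => hπ0 σ

open Classical in
lemma top_count {n k : ℕ} (hk : 1 ≤ k) [NeZero n] (π : Equiv.Perm (Fin n) → ℝ)
    (hπ1 : ∑ σ, π σ = 1) (a : Fin n) :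
    ∑ prof : Fin (2*k-1) → Equiv.Perm (Fin n),
      (if k ≤ (univ.filter fun i => prof i a = 0).card then ∏ i, π (prof i) else 0)
      = Hf k (qtop n π a) := by
  set m := 2*k-1 with hm
  set q := qtop n π a with hq
  set pat : (Fin m → Equiv.Perm (Fin n)) → Finset (Fin m) :=
    fun prof => univ.filter (fun i => prof i a = 0) with hpat
  set T : Finset (Fin m) → Fin m → Finset (Equiv.Perm (Fin n)) :=
    fun S i => univ.filter (fun σ : Equiv.Perm (Fin n) => if i ∈ S then σ a = 0 else ¬ (σ a = 0))
    with hT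
  have step1 : ∑ prof : Fin m → Equiv.Perm (Fin n),
      (if k ≤ (pat prof).card then ∏ i, π (prof i) else 0)
      = ∑ S : Finset (Fin m), ∑ prof ∈ univ.filter (fun prof => pat prof = S),
          (if k ≤ S.card then ∏ i, π (prof i) else 0) := by
    rw [← Finset.sum_fiberwise univ pat
      (fun prof => if k ≤ (pat prof).card then ∏ i, π (prof i) else 0)]
    apply Finset.sum_congr rfl; intro S _
    apply Finset.sum_congr rfl; intro prof hprof
    rw [(Finset.mem_filter.mp hprof).2]
  have fib : ∀ S : Finset (Fin m),
      univ.filter (fun prof => pat prof = S) = Fintype.piFinset (T S) := by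
    intro S
    ext prof
    simp only [Finset.mem_filter, Finset.mem_univ, true_and, Fintype.mem_piFinset, hT, hpat]
    constructor
    · intro h i
      have h' := Finset.ext_iff.mp h i
      simp only [Finset.mem_filter, Finset.mem_univ, true_and] at h'
      by_cases hi : i ∈ S <;> simp [hi] at h' ⊢ <;> tauto
    · intro h
      ext i
      have h' := h i
      simp only [Finset.mem_filter, Finset.mem_univ, true_and]
      by_cases hi : i ∈ S <;> simp [hi] at h' ⊢ <;> tauto
  have val : ∀ (S : Finset (Fin m)) (i : Fin m),
      ∑ σ ∈ T S i, π σ = if i ∈ S then q else 1 - q := by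
    intro S i
    by_cases hi : i ∈ S
    · simp only [hT, hi, if_true]
      rfl
    · simp only [hT, hi, if_false]
      have := Finset.sum_filter_add_sum_filter_not univ
        (fun σ : Equiv.Perm (Fin n) => σ a = 0) π
      rw [hπ1] at this
      have hqd : q = ∑ σ ∈ univ.filter (fun σ : Equiv.Perm (Fin n) => σ a = 0), π σ := rfl
      linarith
  have step2 : ∀ S : Finset (Fin m),
      ∑ prof ∈ univ.filter (fun prof => pat prof = S), ∏ i, π (prof i)
        = q ^ S.card * (1-q) ^ (m - S.card) := by
    intro S
    rw [fib S, ← Finset.prod_univ_sum (T S) (fun _ σ => π σ)]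
    have : ∀ i : Fin m, ∑ σ ∈ T S i, π σ = if i ∈ S then q else 1 - q := fun i => val S i
    rw [Finset.prod_congr rfl (fun i _ => this i)]
    rw [← Finset.prod_mul_prod_compl S]
    rw [Finset.prod_congr rfl (fun i hi => if_pos hi),
        Finset.prod_congr rfl (fun i hi => if_neg (Finset.mem_compl.mp hi)),
        Finset.prod_const, Finset.prod_const, Finset.card_compl, Fintype.card_fin]
  have step3 : ∑ S : Finset (Fin m), (if k ≤ S.card then q ^ S.card * (1-q) ^ (m - S.card) else 0)
      = ∑ S : Finset (Fin m), (if S.card < k then q ^ (m - S.card) * (1-q) ^ S.card else 0) := by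
    apply Fintype.sum_bijective (fun S : Finset (Fin m) => Sᶜ)
      (Function.Involutive.bijective (fun S => compl_compl S))
    intro S
    have hS : S.card ≤ m := by simpa using Finset.card_le_univ S
    rw [Finset.card_compl, Fintype.card_fin]
    have he : m - (m - S.card) = S.card := by omega
    by_cases h : k ≤ S.card
    · rw [if_pos h, if_pos (by omega), he]
    · rw [if_neg h, if_neg (by omega)]
  have step4 : ∑ S : Finset (Fin m), (if S.card < k then q ^ (m - S.card) * (1-q) ^ S.card else 0)
      = Hf k q := by
    rw [← Finset.powerset_univ, Finset.sum_powerset]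
    rw [Finset.card_univ, Fintype.card_fin]
    have inner : ∀ j ∈ range (m+1),
        ∑ S ∈ powersetCard j (univ : Finset (Fin m)),
          (if S.card < k then q ^ (m - S.card) * (1-q) ^ S.card else 0)
        = if j < k then (Nat.choose m j : ℝ) * (q ^ (m - j) * (1-q) ^ j) else 0 := by
      intro j _
      have hc : ∀ S ∈ powersetCard j (univ : Finset (Fin m)), S.card = j :=
        fun S hS => (Finset.mem_powersetCard.mp hS).2
      rw [Finset.sum_congr rfl (fun S hS => by rw [hc S hS]), Finset.sum_const,
        Finset.card_powersetCard, Finset.card_univ, Fintype.card_fin, nsmul_eq_mul,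
        mul_ite, mul_zero]
    rw [Finset.sum_congr rfl inner]
    rw [← Finset.sum_filter]
    have : (range (m+1)).filter (fun j => j < k) = range k := by
      ext j; simp only [Finset.mem_filter, Finset.mem_range]
      constructor
      · exact fun h => h.2
      · intro h; exact ⟨by omega, h⟩
    rw [this]
    rfl
  rw [step1]
  calc ∑ S : Finset (Fin m), ∑ prof ∈ univ.filter (fun prof => pat prof = S),
          (if k ≤ S.card then ∏ i, π (prof i) else 0)
      = ∑ S : Finset (Fin m), (if k ≤ S.card then q ^ S.card * (1-q) ^ (m - S.card) else 0) := by
        apply Finset.sum_congr rfl; intro S _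
        by_cases hS : k ≤ S.card
        · simp only [hS, if_true]
          exact step2 S
        · simp only [hS, if_false, Finset.sum_const_zero]
    _ = Hf k q := by rw [step3, step4]

open Classical in
lemma pointwise {n k : ℕ} (hk : 1 ≤ k) [NeZero n] (π : Equiv.Perm (Fin n) → ℝ)
    (hπ0 : ∀ σ, 0 ≤ π σ) (prof : Fin (2*k-1) → Equiv.Perm (Fin n)) :
    (∑ a : Fin n, if k ≤ (univ.filter fun i => prof i a = 0).card then ∏ i, π (prof i) else 0)
    ≤ (if ∃ a, CondorcetWinner k prof a then ∏ i, π (prof i) else 0) := by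
  have hP : 0 ≤ ∏ i, π (prof i) := Finset.prod_nonneg fun i _ => hπ0 _
  have hCW : ∀ a, k ≤ (univ.filter fun i => prof i a = 0).card → CondorcetWinner k prof a := by
    intro a ha b hb
    refine le_trans ha (Finset.card_le_card ?_)
    intro i hi
    simp only [Finset.mem_filter, Finset.mem_univ, true_and] at hi ⊢
    have hne : prof i b ≠ 0 := by
      rw [← hi]; intro hE; exact hb ((prof i).injective hE)
    have hv : (prof i b).val ≠ 0 := by rw [Ne, Fin.val_eq_zero_iff]; exact hne
    have hv0 : (prof i a).val = 0 := Fin.val_eq_zero_iff.mpr hi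
    rw [Fin.lt_def, hv0]
    omega
  have huniq : ∀ a a', k ≤ (univ.filter fun i => prof i a = 0).card →
      k ≤ (univ.filter fun i => prof i a' = 0).card → a = a' := by
    intro a a' ha ha'
    by_contra hne
    have hdisj : Disjoint (univ.filter fun i => prof i a = 0)
        (univ.filter fun i => prof i a' = 0) := by
      rw [Finset.disjoint_left]
      intro i hi hi'
      simp only [Finset.mem_filter, Finset.mem_univ, true_and] at hi hi'
      exact hne ((prof i).injective (hi.trans hi'.symm))
    have hcu := Finset.card_union_of_disjoint hdisj
    have hle : ((univ.filter fun i => prof i a = 0) ∪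
        (univ.filter fun i => prof i a' = 0)).card ≤ 2*k-1 := by
      simpa using Finset.card_le_univ
        ((univ.filter fun i => prof i a = 0) ∪ (univ.filter fun i => prof i a' = 0))
    omega
  by_cases hex : ∃ a, k ≤ (univ.filter fun i => prof i a = 0).card
  · obtain ⟨a0, ha0⟩ := hex
    rw [Finset.sum_eq_single a0]
    · rw [if_pos ha0, if_pos ⟨a0, hCW a0 ha0⟩]
    · intro a' _ hne
      exact if_neg (fun h => hne (huniq a' a0 h ha0))
    · intro h; exact absurd (Finset.mem_univ a0) h
  · push_neg at hex
    rw [Finset.sum_eq_zero (fun a _ => if_neg (not_le.mpr (hex a)))]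
    by_cases hcw : ∃ a, CondorcetWinner k prof a
    · rw [if_pos hcw]; exact hP
    · rw [if_neg hcw]

open Classical in
/-- Any probability distribution `π` on rankings gives a Condorcet winner with probability
at least `n^{-(2k-2)} ∑_{ℓ=0}^{k-1} C(2k-1,ℓ)(n-1)^ℓ`. -/
theorem condorcet_prob_ge (n k : ℕ) (hn : 1 ≤ n) (hk : 1 ≤ k)
    (π : Equiv.Perm (Fin n) → ℝ) (hπ0 : ∀ σ, 0 ≤ π σ) (hπ1 : ∑ σ, π σ = 1) :
    ((n : ℝ) ^ (2*k-2))⁻¹ * ∑ ℓ ∈ range k, (Nat.choose (2*k-1) ℓ : ℝ) * ((n:ℝ)-1)^ℓ ≤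
      ∑ prof : Fin (2*k-1) → Equiv.Perm (Fin n),
        (if ∃ a : Fin n, CondorcetWinner k prof a then ∏ i, π (prof i) else 0) := by
  haveI : NeZero n := ⟨by omega⟩
  have hN0 : (0:ℝ) < (n:ℝ) := by exact_mod_cast hn
  have h1 : ∑ a, qtop n π a = 1 := qtop_sum π hπ1
  have hmain := sum_Hf_ge k n hk hn (qtop n π) (qtop_nonneg π hπ0) h1
  have hstep : ∑ a : Fin n, Hf k (qtop n π a) ≤ ∑ prof : Fin (2*k-1) → Equiv.Perm (Fin n),
      (if ∃ a : Fin n, CondorcetWinner k prof a then ∏ i, π (prof i) else 0) := by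
    have e : ∀ a : Fin n, Hf k (qtop n π a) = ∑ prof : Fin (2*k-1) → Equiv.Perm (Fin n),
        (if k ≤ (univ.filter fun i => prof i a = 0).card then ∏ i, π (prof i) else 0) :=
      fun a => (top_count hk π hπ1 a).symm
    rw [Finset.sum_congr rfl (fun a _ => e a), Finset.sum_comm]
    exact Finset.sum_le_sum fun prof _ => pointwise hk π hπ0 prof
  have hLHS : ((n : ℝ) ^ (2*k-2))⁻¹ * ∑ ℓ ∈ range k, (Nat.choose (2*k-1) ℓ : ℝ) * ((n:ℝ)-1)^ℓ
      = (n:ℝ) * Hf k (1/(n:ℝ)) := by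
    unfold Hf
    rw [Finset.mul_sum, Finset.mul_sum]
    apply Finset.sum_congr rfl
    intro ℓ hℓ
    have hℓk : ℓ < k := Finset.mem_range.mp hℓ
    have hmℓ : (2*k-1-ℓ) + ℓ = 2*k-1 := by omega
    have e1 : ((1:ℝ)/(n:ℝ))^(2*k-1-ℓ) * (1 - 1/(n:ℝ))^ℓ
        = ((n:ℝ)-1)^ℓ * ((1/(n:ℝ))^(2*k-1)) := by
      have h2 : (1:ℝ) - 1/(n:ℝ) = ((n:ℝ)-1) * (1/(n:ℝ)) := by field_simp
      rw [h2, mul_pow]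
      conv_rhs => rw [← hmℓ, pow_add]
      ring
    have e2 : (n:ℝ) * ((1:ℝ)/(n:ℝ))^(2*k-1) = (((n:ℝ))^(2*k-2))⁻¹ := by
      rw [one_div, inv_pow]
      have h3 : (2*k-1) = (2*k-2)+1 := by omega
      rw [h3, pow_succ, mul_inv]
      field_simp
    rw [e1, show (n:ℝ) * ((Nat.choose (2*k-1) ℓ : ℝ) * (((n:ℝ)-1)^ℓ * ((1/(n:ℝ))^(2*k-1))))
        = ((n:ℝ) * ((1:ℝ)/(n:ℝ))^(2*k-1)) * ((Nat.choose (2*k-1) ℓ : ℝ) * ((n:ℝ)-1)^ℓ) from by ring,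
      e2]
  rw [hLHS]
  exact le_trans hmain hstep
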